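/- Lyapunov decrease for droop-controlled inverters: let T, K, X, E be diagonal positive definite N×N matrices, Λ, H̃ symmetric, A arbitrary N×N, and define the quadratic function V(ν, ξ, ε) = νᵀK⁻¹Tν + ξᵀΛξ - 2ξᵀAᵀε - εᵀH̃ε. Along the linear dynamics ξ̇ = ν, Tν̇ = -ν - K(Λξ - Aᵀε), Tε̇ = XE(Aξ + H̃ε), one has dV/dt = -2νᵀK⁻¹ν - 2(Aξ + H̃ε)ᵀ T⁻¹XE (Aξ + H̃ε) ≤ 0. -/

import Mathlib

open Matrix

lemma stmt17_dot {N : ℕ} {f g : ℝ → Fin N → ℝ} {f' g' : Fin N → ℝ} {t : ℝ}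
    (hf : HasDerivAt f f' t) (hg : HasDerivAt g g' t) :
    HasDerivAt (fun s => f s ⬝ᵥ g s) (f' ⬝ᵥ g t + f t ⬝ᵥ g') t := by
  simp only [dotProduct]
  rw [← Finset.sum_add_distrib]
  exact HasDerivAt.fun_sum fun i _ =>
    ((hasDerivAt_pi.1 hf i).mul (hasDerivAt_pi.1 hg i))

lemma stmt17_mulVec {N : ℕ} (M : Matrix (Fin N) (Fin N) ℝ) {f : ℝ → Fin N → ℝ}
    {f' : Fin N → ℝ} {t : ℝ} (hf : HasDerivAt f f' t) :
    HasDerivAt (fun s => M *ᵥ f s) (M *ᵥ f') t := by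
  rw [hasDerivAt_pi]
  intro i
  simp only [mulVec, dotProduct]
  exact HasDerivAt.fun_sum fun j _ => (hasDerivAt_pi.1 hf j).const_mul (M i j)

lemma stmt17_symm {N : ℕ} {M : Matrix (Fin N) (Fin N) ℝ} (hM : M.IsSymm)
    (a b : Fin N → ℝ) : a ⬝ᵥ (M *ᵥ b) = b ⬝ᵥ (M *ᵥ a) := by
  rw [dotProduct_mulVec, ← hM, vecMul_transpose, dotProduct_comm, hM]

lemma stmt17_diag_inv {N : ℕ} {d : Fin N → ℝ} (hd : ∀ j, d j ≠ 0) :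
    (Matrix.diagonal d)⁻¹ = Matrix.diagonal (fun i => (d i)⁻¹) := by
  apply Matrix.inv_eq_right_inv
  rw [diagonal_mul_diagonal]
  have h : (fun i => d i * (d i)⁻¹) = fun _ => (1:ℝ) := funext fun i => mul_inv_cancel₀ (hd i)
  rw [h]
  exact Matrix.diagonal_one

/-- Lyapunov decrease for the linearized droop-controlled inverter dynamics:
along the trajectories, `dV/dt = -2νᵀK⁻¹ν - 2(Aξ + H̃ε)ᵀT⁻¹XE(Aξ + H̃ε) ≤ 0`. -/
theorem stmt17 {N : ℕ} (Λ A Ht : Matrix (Fin N) (Fin N) ℝ)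
    (τ κ χ E : Fin N → ℝ)
    (hτ : ∀ j, 0 < τ j) (hκ : ∀ j, 0 < κ j) (hχ : ∀ j, 0 < χ j)
    (hE : ∀ j, 0 < E j)
    (hΛsymm : Λ.IsSymm) (hHtsymm : Ht.IsSymm)
    (ξ ν ε : ℝ → Fin N → ℝ)
    (hξ : ∀ t, HasDerivAt ξ (ν t) t)
    (hν : ∀ t, HasDerivAt ν
      ((Matrix.diagonal τ)⁻¹ *ᵥ
        (-(ν t) - Matrix.diagonal κ *ᵥ (Λ *ᵥ ξ t - Aᵀ *ᵥ ε t))) t)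
    (hε : ∀ t, HasDerivAt ε
      ((Matrix.diagonal τ)⁻¹ *ᵥ
        ((Matrix.diagonal χ * Matrix.diagonal E) *ᵥ (A *ᵥ ξ t + Ht *ᵥ ε t))) t)
    (V : ℝ → ℝ)
    (hV : V = fun t =>
      ν t ⬝ᵥ (((Matrix.diagonal κ)⁻¹ * Matrix.diagonal τ) *ᵥ ν t) +
      ξ t ⬝ᵥ (Λ *ᵥ ξ t) - 2 * (ξ t ⬝ᵥ (Aᵀ *ᵥ ε t)) - ε t ⬝ᵥ (Ht *ᵥ ε t)) :
    ∀ t : ℝ,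
      HasDerivAt V
        (-2 * (ν t ⬝ᵥ ((Matrix.diagonal κ)⁻¹ *ᵥ ν t)) -
          2 * ((A *ᵥ ξ t + Ht *ᵥ ε t) ⬝ᵥ
            (((Matrix.diagonal τ)⁻¹ * Matrix.diagonal χ * Matrix.diagonal E) *ᵥ
              (A *ᵥ ξ t + Ht *ᵥ ε t)))) t ∧
      (-2 * (ν t ⬝ᵥ ((Matrix.diagonal κ)⁻¹ *ᵥ ν t)) -
          2 * ((A *ᵥ ξ t + Ht *ᵥ ε t) ⬝ᵥ
            (((Matrix.diagonal τ)⁻¹ * Matrix.diagonal χ * Matrix.diagonal E) *ᵥ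
              (A *ᵥ ξ t + Ht *ᵥ ε t)))) ≤ 0 := by
  intro t
  have hτ0 : ∀ j, τ j ≠ 0 := fun j => (hτ j).ne'
  have hκ0 : ∀ j, κ j ≠ 0 := fun j => (hκ j).ne'
  have hKinv : (Matrix.diagonal κ)⁻¹ = Matrix.diagonal (fun i => (κ i)⁻¹) :=
    stmt17_diag_inv hκ0
  have hTinv : (Matrix.diagonal τ)⁻¹ = Matrix.diagonal (fun i => (τ i)⁻¹) :=
    stmt17_diag_inv hτ0
  set M1 : Matrix (Fin N) (Fin N) ℝ := (Matrix.diagonal κ)⁻¹ * Matrix.diagonal τ with hM1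
  set Dt : Matrix (Fin N) (Fin N) ℝ :=
    (Matrix.diagonal τ)⁻¹ * Matrix.diagonal χ * Matrix.diagonal E with hDt
  set x := ξ t
  set n := ν t
  set e := ε t
  set u : Fin N → ℝ := Λ *ᵥ x - Aᵀ *ᵥ e with hu
  set w : Fin N → ℝ := A *ᵥ x + Ht *ᵥ e with hw
  set n' : Fin N → ℝ := (Matrix.diagonal τ)⁻¹ *ᵥ (-n - Matrix.diagonal κ *ᵥ u) with hn'
  set e' : Fin N → ℝ :=
    (Matrix.diagonal τ)⁻¹ *ᵥ ((Matrix.diagonal χ * Matrix.diagonal E) *ᵥ w) with he'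
  -- M1 is a diagonal matrix
  have hM1diag : M1 = Matrix.diagonal (fun i => (κ i)⁻¹ * τ i) := by
    rw [hM1, hKinv, diagonal_mul_diagonal]
  have hM1symm : M1.IsSymm := by
    rw [hM1diag]; exact (Matrix.diagonal_transpose _)
  -- key computation: M1 *ᵥ n'
  have key1 : M1 *ᵥ n' = -((Matrix.diagonal κ)⁻¹ *ᵥ n) - u := by
    funext i
    simp only [hn', hM1diag, hKinv, hTinv, mulVec_diagonal, Pi.sub_apply, Pi.neg_apply]
    field_simp [hτ0 i, hκ0 i]
  -- key computation: e'
  have key2 : e' = Dt *ᵥ w := by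
    rw [he', mulVec_mulVec, hDt, Matrix.mul_assoc]
  -- derivative of V
  have hd1 : HasDerivAt (fun s => ν s ⬝ᵥ (M1 *ᵥ ν s))
      (n' ⬝ᵥ (M1 *ᵥ n) + n ⬝ᵥ (M1 *ᵥ n')) t :=
    stmt17_dot (hν t) (stmt17_mulVec M1 (hν t))
  have hd2 : HasDerivAt (fun s => ξ s ⬝ᵥ (Λ *ᵥ ξ s))
      (n ⬝ᵥ (Λ *ᵥ x) + x ⬝ᵥ (Λ *ᵥ n)) t :=
    stmt17_dot (hξ t) (stmt17_mulVec Λ (hξ t))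
  have hd3 : HasDerivAt (fun s => 2 * (ξ s ⬝ᵥ (Aᵀ *ᵥ ε s)))
      (2 * (n ⬝ᵥ (Aᵀ *ᵥ e) + x ⬝ᵥ (Aᵀ *ᵥ e'))) t :=
    (stmt17_dot (hξ t) (stmt17_mulVec Aᵀ (hε t))).const_mul 2
  have hd4 : HasDerivAt (fun s => ε s ⬝ᵥ (Ht *ᵥ ε s))
      (e' ⬝ᵥ (Ht *ᵥ e) + e ⬝ᵥ (Ht *ᵥ e')) t :=
    stmt17_dot (hε t) (stmt17_mulVec Ht (hε t))
  have hDV : HasDerivAt V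
      (n' ⬝ᵥ (M1 *ᵥ n) + n ⬝ᵥ (M1 *ᵥ n') + (n ⬝ᵥ (Λ *ᵥ x) + x ⬝ᵥ (Λ *ᵥ n)) -
        2 * (n ⬝ᵥ (Aᵀ *ᵥ e) + x ⬝ᵥ (Aᵀ *ᵥ e')) -
        (e' ⬝ᵥ (Ht *ᵥ e) + e ⬝ᵥ (Ht *ᵥ e'))) t := by
    rw [hV]
    exact ((hd1.add hd2).sub hd3).sub hd4
  -- rewrite the derivative into the target form
  have heq : n' ⬝ᵥ (M1 *ᵥ n) + n ⬝ᵥ (M1 *ᵥ n') + (n ⬝ᵥ (Λ *ᵥ x) + x ⬝ᵥ (Λ *ᵥ n)) -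
        2 * (n ⬝ᵥ (Aᵀ *ᵥ e) + x ⬝ᵥ (Aᵀ *ᵥ e')) -
        (e' ⬝ᵥ (Ht *ᵥ e) + e ⬝ᵥ (Ht *ᵥ e')) =
      -2 * (n ⬝ᵥ ((Matrix.diagonal κ)⁻¹ *ᵥ n)) - 2 * (w ⬝ᵥ (Dt *ᵥ w)) := by
    have e1 : n' ⬝ᵥ (M1 *ᵥ n) = n ⬝ᵥ (M1 *ᵥ n') := stmt17_symm hM1symm n' n
    have e2 : x ⬝ᵥ (Λ *ᵥ n) = n ⬝ᵥ (Λ *ᵥ x) := stmt17_symm hΛsymm x n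
    have e3 : x ⬝ᵥ (Aᵀ *ᵥ e') = (A *ᵥ x) ⬝ᵥ e' := by
      rw [dotProduct_mulVec, vecMul_transpose]
    have e4 : e ⬝ᵥ (Ht *ᵥ e') = (Ht *ᵥ e) ⬝ᵥ e' := by
      rw [dotProduct_mulVec, ← hHtsymm, vecMul_transpose, hHtsymm]
    have e5 : e' ⬝ᵥ (Ht *ᵥ e) = (Ht *ᵥ e) ⬝ᵥ e' := by
      rw [stmt17_symm hHtsymm e' e, e4]
    have e6 : n ⬝ᵥ (M1 *ᵥ n') =
        -(n ⬝ᵥ ((Matrix.diagonal κ)⁻¹ *ᵥ n)) - (n ⬝ᵥ (Λ *ᵥ x) - n ⬝ᵥ (Aᵀ *ᵥ e)) := by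
      rw [key1, dotProduct_sub, dotProduct_neg, hu, dotProduct_sub]
    have e7 : w ⬝ᵥ (Dt *ᵥ w) = (A *ᵥ x) ⬝ᵥ e' + (Ht *ᵥ e) ⬝ᵥ e' := by
      rw [← key2, hw, add_dotProduct]
    rw [e1, e2, e3, e4, e5, e6, e7]
    ring
  rw [heq] at hDV
  refine ⟨hDV, ?_⟩
  -- nonpositivity
  have h1 : 0 ≤ n ⬝ᵥ ((Matrix.diagonal κ)⁻¹ *ᵥ n) := by
    rw [hKinv]
    refine Finset.sum_nonneg fun i _ => ?_
    simp only [mulVec_diagonal]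
    have : n i * ((κ i)⁻¹ * n i) = (κ i)⁻¹ * (n i) ^ 2 := by ring
    rw [this]
    have := hκ i
    positivity
  have h2 : 0 ≤ w ⬝ᵥ (Dt *ᵥ w) := by
    have hDtdiag : Dt = Matrix.diagonal (fun i => (τ i)⁻¹ * χ i * E i) := by
      rw [hDt, hTinv, diagonal_mul_diagonal, diagonal_mul_diagonal]
    rw [hDtdiag]
    refine Finset.sum_nonneg fun i _ => ?_
    simp only [mulVec_diagonal]
    have : w i * ((τ i)⁻¹ * χ i * E i * w i) = (τ i)⁻¹ * χ i * E i * (w i) ^ 2 := by ring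
    rw [this]
    have := hτ i; have := hχ i; have := hE i
    positivity
  linarith
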